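/- arXiv:2106.04218 — 4 statements merged into one kernel-verified Lean document; each statement's English description precedes it below -/
import Mathlib

section
/- For 0 ≤ β ≤ 14.4, the density φ(x,β) = (1 + (β/576)·p₄(x))·(1/2)·sech(πx/2) with p₄(x)=x⁴−14x²+9 has mean 0, variance 1, and fourth moment 5 + β; that is, the polynomial modification adds exactly β to the kurtosis of the parent HS law. -/
open MeasureTheory Real

noncomputable def hsDensity (x : ℝ) : ℝ := (1 / 2) * (Real.cosh (Real.pi * x / 2))⁻¹

noncomputable def gchs (x β : ℝ) : ℝ :=
  (1 + (β / 576) * (x ^ 4 - 14 * x ^ 2 + 9)) * hsDensity x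

namespace GCHSAux

open Set Finset

/-! ### Bernoulli numbers and Bernoulli polynomial values -/

lemma bodd {n : ℕ} (h : Odd n) (h1 : 1 < n) : bernoulli n = 0 := by
  rw [bernoulli_eq_bernoulli'_of_ne_one (by omega), bernoulli'_eq_zero_of_odd h h1]

lemma b6 : bernoulli 6 = 1/42 := by
  have h := sum_bernoulli 7
  simp only [Finset.sum_range_succ, Finset.sum_range_zero] at h
  rw [bernoulli_zero, bernoulli_one,
    bernoulli_eq_bernoulli'_of_ne_one (by norm_num), bernoulli'_two,
    bodd (by decide) (by norm_num),
    bernoulli_eq_bernoulli'_of_ne_one (by norm_num), bernoulli'_four,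
    bodd (by decide) (by norm_num)] at h
  norm_num [Nat.choose] at h
  linarith

lemma b8 : bernoulli 8 = -1/30 := by
  have h := sum_bernoulli 9
  simp only [Finset.sum_range_succ, Finset.sum_range_zero] at h
  rw [bernoulli_zero, bernoulli_one,
    bernoulli_eq_bernoulli'_of_ne_one (by norm_num), bernoulli'_two,
    bodd (by decide) (by norm_num),
    bernoulli_eq_bernoulli'_of_ne_one (by norm_num), bernoulli'_four,
    bodd (by decide) (by norm_num), b6,
    bodd (by decide) (by norm_num)] at h
  norm_num [Nat.choose] at h
  linarith

lemma bp5 : (Polynomial.bernoulli 5).eval (1/4 : ℚ) = -25/1024 := by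
  simp_rw [Polynomial.bernoulli, Finset.sum_range_succ, Polynomial.eval_add,
    Polynomial.eval_monomial, Finset.sum_range_zero, Polynomial.eval_zero, zero_add]
  rw [bernoulli_zero, bernoulli_one,
    bernoulli_eq_bernoulli'_of_ne_one (by norm_num), bernoulli'_two,
    bodd (by decide) (by norm_num),
    bernoulli_eq_bernoulli'_of_ne_one (by norm_num), bernoulli'_four,
    bodd (by decide) (by norm_num)]
  norm_num [Nat.choose]

lemma bp7 : (Polynomial.bernoulli 7).eval (1/4 : ℚ) = 427/16384 := by
  simp_rw [Polynomial.bernoulli, Finset.sum_range_succ, Polynomial.eval_add,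
    Polynomial.eval_monomial, Finset.sum_range_zero, Polynomial.eval_zero, zero_add]
  rw [bernoulli_zero, bernoulli_one,
    bernoulli_eq_bernoulli'_of_ne_one (by norm_num), bernoulli'_two,
    bodd (by decide) (by norm_num),
    bernoulli_eq_bernoulli'_of_ne_one (by norm_num), bernoulli'_four,
    bodd (by decide) (by norm_num), b6, bodd (by decide) (by norm_num)]
  norm_num [Nat.choose]

lemma bp9 : (Polynomial.bernoulli 9).eval (1/4 : ℚ) = -12465/262144 := by
  simp_rw [Polynomial.bernoulli, Finset.sum_range_succ, Polynomial.eval_add,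
    Polynomial.eval_monomial, Finset.sum_range_zero, Polynomial.eval_zero, zero_add]
  rw [bernoulli_zero, bernoulli_one,
    bernoulli_eq_bernoulli'_of_ne_one (by norm_num), bernoulli'_two,
    bodd (by decide) (by norm_num),
    bernoulli_eq_bernoulli'_of_ne_one (by norm_num), bernoulli'_four,
    bodd (by decide) (by norm_num), b6, bodd (by decide) (by norm_num),
    b8, bodd (by decide) (by norm_num)]
  norm_num [Nat.choose]

/-! ### Dirichlet beta values at odd integers -/

lemma cos_nat_pi (n : ℕ) : Real.cos (n * π) = (-1)^n := by
  simpa using Real.cos_nat_mul_pi_sub 0 n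

lemma hasSum_beta_aux {k : ℕ} (hk : k ≠ 0) :
    HasSum (fun j : ℕ => (-1 : ℝ)^j / (2*(j:ℝ)+1)^(2*k+1))
      ((-1 : ℝ) ^ (k + 1) * (2 * π) ^ (2 * k + 1) / 2 / ((2 * k + 1).factorial : ℝ) *
        (Polynomial.map (algebraMap ℚ ℝ) (Polynomial.bernoulli (2 * k + 1))).eval (1/4 : ℝ)) := by
  have h := hasSum_one_div_nat_pow_mul_sin hk (x := (1/4 : ℝ))
    (by constructor <;> norm_num)
  rw [← Function.Injective.hasSum_iff (g := fun j : ℕ => 2*j+1)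
    (fun a b hab => by simpa using hab) ?_] at h
  · convert h using 2 with j
    have h1 : ((2*j+1 : ℕ) : ℝ) = 2*(j:ℝ)+1 := by push_cast; ring
    have h2 : 2 * π * (2*(j:ℝ)+1) * (1/4) = (j:ℝ) * π + π/2 := by ring
    rw [Function.comp_apply, h1, h2, Real.sin_add_pi_div_two, cos_nat_pi]
    ring
  · intro n hn
    have : ∃ m : ℕ, n = 2*m := by
      rcases Nat.even_or_odd n with ⟨m, hm⟩ | ⟨m, hm⟩
      · exact ⟨m, by omega⟩
      · exact absurd ⟨m, show 2*m+1 = n by omega⟩ hn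
    obtain ⟨m, rfl⟩ := this
    have : 2 * π * ((2*m : ℕ) : ℝ) * (1/4) = (m:ℝ) * π := by push_cast; ring
    rw [this, Real.sin_nat_mul_pi, mul_zero]

lemma hasSum_beta3 : HasSum (fun j : ℕ => (-1:ℝ)^j / (2*(j:ℝ)+1)^3) (π^3/32) := by
  have h := hasSum_beta_aux (k := 1) one_ne_zero
  have e : (1/4:ℝ) = algebraMap ℚ ℝ (1/4:ℚ) := by norm_num
  rw [e, Polynomial.eval_map, Polynomial.eval₂_at_apply,
    show 2*1+1 = 3 from rfl, Polynomial.bernoulli_three_eval_one_quarter] at h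
  have e2 : ((algebraMap ℚ ℝ) (3/64 : ℚ) : ℝ) = 3/64 := by
    rw [eq_ratCast]; norm_num
  rw [e2] at h
  convert h using 1
  norm_num [Nat.factorial]
  ring

lemma hasSum_beta5 : HasSum (fun j : ℕ => (-1:ℝ)^j / (2*(j:ℝ)+1)^5) (5*π^5/1536) := by
  have h := hasSum_beta_aux (k := 2) two_ne_zero
  have e : (1/4:ℝ) = algebraMap ℚ ℝ (1/4:ℚ) := by norm_num
  rw [e, Polynomial.eval_map, Polynomial.eval₂_at_apply,
    show 2*2+1 = 5 from rfl, bp5] at h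
  have e2 : ((algebraMap ℚ ℝ) (-25/1024 : ℚ) : ℝ) = -25/1024 := by
    rw [eq_ratCast]; norm_num
  rw [e2] at h
  convert h using 1
  norm_num [Nat.factorial]
  ring

lemma hasSum_beta7 : HasSum (fun j : ℕ => (-1:ℝ)^j / (2*(j:ℝ)+1)^7) (61*π^7/184320) := by
  have h := hasSum_beta_aux (k := 3) three_ne_zero
  have e : (1/4:ℝ) = algebraMap ℚ ℝ (1/4:ℚ) := by norm_num
  rw [e, Polynomial.eval_map, Polynomial.eval₂_at_apply,
    show 2*3+1 = 7 from rfl, bp7] at h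
  have e2 : ((algebraMap ℚ ℝ) (427/16384 : ℚ) : ℝ) = 427/16384 := by
    rw [eq_ratCast]; norm_num
  rw [e2] at h
  convert h using 1
  norm_num [Nat.factorial]
  ring

lemma hasSum_beta9 : HasSum (fun j : ℕ => (-1:ℝ)^j / (2*(j:ℝ)+1)^9) (1385*π^9/41287680) := by
  have h := hasSum_beta_aux (k := 4) four_ne_zero
  have e : (1/4:ℝ) = algebraMap ℚ ℝ (1/4:ℚ) := by norm_num
  rw [e, Polynomial.eval_map, Polynomial.eval₂_at_apply,
    show 2*4+1 = 9 from rfl, bp9] at h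
  have e2 : ((algebraMap ℚ ℝ) (-12465/262144 : ℚ) : ℝ) = -12465/262144 := by
    rw [eq_ratCast]; norm_num
  rw [e2] at h
  convert h using 1
  norm_num [Nat.factorial]
  ring

lemma hasSum_sech {x : ℝ} (hx : 0 < x) :
    HasSum (fun j : ℕ => 2 * (-1:ℝ)^j * Real.exp (-((2*(j:ℝ)+1) * (π/2)) * x))
      ((Real.cosh (π * x / 2))⁻¹) := by
  have hr : ‖-Real.exp (-(π * x))‖ < 1 := by
    rw [norm_neg, Real.norm_eq_abs, abs_of_pos (Real.exp_pos _)]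
    rw [Real.exp_lt_one_iff]
    have := Real.pi_pos
    nlinarith
  have h := (hasSum_geometric_of_norm_lt_one hr).mul_left (2 * Real.exp (-(π * x / 2)))
  have hab : Real.exp (π * x / 2) * Real.exp (-(π * x / 2)) = 1 := by
    rw [← Real.exp_add]; ring_nf; exact Real.exp_zero
  have e1 : Real.exp (-(π * x)) = Real.exp (-(π * x / 2)) * Real.exp (-(π * x / 2)) := by
    rw [← Real.exp_add]; ring_nf
  convert h using 1
  · rfl
  · funext j
    conv_rhs => rw [neg_pow, ← Real.exp_nat_mul]
    rw [show (2:ℝ) * Real.exp (-(π * x / 2)) * ((-1:ℝ)^j * Real.exp ((j:ℝ) * -(π*x)))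
        = 2*(-1:ℝ)^j * (Real.exp (-(π*x/2)) * Real.exp ((j:ℝ)*-(π*x))) by ring,
      ← Real.exp_add]
    congr 1
    rw [Real.exp_eq_exp]
    ring
  · rw [Real.cosh_eq, e1, sub_neg_eq_add]
    set a := Real.exp (π * x / 2) with ha
    set b := Real.exp (-(π * x / 2)) with hb
    have h1 : 0 < a := Real.exp_pos _
    have h2 : 0 < b := Real.exp_pos _
    have hd1 : (1:ℝ) + b * b ≠ 0 := by positivity
    have hd2 : a + b ≠ 0 := by positivity
    field_simp
    nlinarith [hab]

lemma int_pow_exp (n : ℕ) {b : ℝ} (hb : 0 < b) :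
    ∫ x in Ioi (0:ℝ), x^n * Real.exp (-b*x) = n.factorial / b^(n+1) := by
  have hq : (-1:ℝ) < n := lt_of_lt_of_le neg_one_lt_zero n.cast_nonneg
  have h := integral_rpow_mul_exp_neg_mul_rpow (p := 1) (q := n) one_pos hq hb
  rw [show ∫ x in Ioi (0:ℝ), x ^ (n:ℝ) * Real.exp (-b * x ^ (1:ℝ))
      = ∫ x in Ioi (0:ℝ), x^n * Real.exp (-b*x) from
    setIntegral_congr_fun measurableSet_Ioi (fun x hx => by
      rw [Real.rpow_natCast, Real.rpow_one])] at h
  rw [h, show -((n:ℝ)+1)/1 = -((n:ℝ)+1) by ring, show ((n:ℝ)+1)/1 = ((n:ℝ)+1) by ring,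
    Real.Gamma_nat_eq_factorial, Real.rpow_neg hb.le,
    show ((n:ℝ)+1) = ((n+1 : ℕ) : ℝ) by push_cast; ring, Real.rpow_natCast]
  field_simp

lemma intOn_pow_exp (n : ℕ) {b : ℝ} (hb : 0 < b) :
    IntegrableOn (fun x : ℝ => x^n * Real.exp (-b*x)) (Ioi 0) := by
  have hq : (-1:ℝ) < n := lt_of_lt_of_le neg_one_lt_zero n.cast_nonneg
  have h := integrableOn_rpow_mul_exp_neg_mul_rpow (p := 1) (s := n) hq one_pos hb
  exact h.congr_fun (fun x hx => by
    beta_reduce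
    rw [Real.rpow_natCast, Real.rpow_one]) measurableSet_Ioi

lemma cosh_half_abs (x : ℝ) : Real.cosh (π * |x| / 2) = Real.cosh (π * x / 2) := by
  rw [show π * |x| / 2 = |π * x / 2| by
    rw [abs_div, abs_mul, abs_of_pos Real.pi_pos]; norm_num, Real.cosh_abs]

lemma cont_pow_sech (n : ℕ) :
    Continuous fun x : ℝ => x^n * (Real.cosh (π * x / 2))⁻¹ := by
  apply (continuous_pow n).mul
  exact (Real.continuous_cosh.comp (by continuity)).inv₀
    (fun x => (Real.cosh_pos (x := π * x / 2)).ne')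

lemma sech_le (x : ℝ) (hx : 0 ≤ x) :
    (Real.cosh (π * x / 2))⁻¹ ≤ 2 * Real.exp (-(π/2) * x) := by
  have h1 : Real.exp (π * x / 2) / 2 ≤ Real.cosh (π * x / 2) := by
    rw [Real.cosh_eq]
    have := (Real.exp_pos (-(π * x / 2))).le
    linarith
  calc (Real.cosh (π * x / 2))⁻¹ ≤ (Real.exp (π * x / 2) / 2)⁻¹ :=
        inv_anti₀ (by positivity) h1
    _ = 2 * Real.exp (-(π/2) * x) := by
        rw [inv_div, show -(π/2) * x = -(π * x / 2) by ring, Real.exp_neg, div_eq_mul_inv]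

lemma intOn_pow_sech (n : ℕ) :
    IntegrableOn (fun x : ℝ => x^n * (Real.cosh (π * x / 2))⁻¹) (Ioi 0) := by
  apply Integrable.mono' ((intOn_pow_exp n (b := π/2) (by positivity)).const_mul 2)
    (cont_pow_sech n).aestronglyMeasurable.restrict
  filter_upwards [ae_restrict_mem measurableSet_Ioi] with x hx
  have hx0 : (0:ℝ) < x := hx
  rw [Real.norm_eq_abs, abs_mul, abs_pow, abs_of_pos hx0, abs_inv,
    abs_of_pos (Real.cosh_pos _)]
  calc x^n * (Real.cosh (π * x / 2))⁻¹ ≤ x^n * (2 * Real.exp (-(π/2) * x)) :=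
        mul_le_mul_of_nonneg_left (sech_le x hx0.le) (by positivity)
    _ = 2 * (x^n * Real.exp (-(π/2) * x)) := by ring

lemma integrable_pow_sech (n : ℕ) :
    Integrable (fun x : ℝ => x^n * (Real.cosh (π * x / 2))⁻¹) := by
  set g : ℝ → ℝ := fun x => |x|^n * (Real.cosh (π * x / 2))⁻¹ with hg
  have hIoi : IntegrableOn g (Ioi 0) :=
    (intOn_pow_sech n).congr_fun
      (fun x hx => by simp only [g, abs_of_pos (show (0:ℝ) < x from hx)])
      measurableSet_Ioi
  have hIic : IntegrableOn g (Iic 0) := by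
    rw [← Measure.map_neg_eq_self (volume : Measure ℝ)]
    have m : MeasurableEmbedding fun x : ℝ => -x :=
      (Homeomorph.neg ℝ).measurableEmbedding
    rw [m.integrableOn_map_iff]
    have : (g ∘ fun x : ℝ => -x) = g := by
      funext x
      simp only [Function.comp_apply, g, abs_neg]
      rw [← cosh_half_abs x, ← abs_neg x, cosh_half_abs (-x)]
    rw [this]
    simp_rw [neg_preimage, neg_Iic, neg_zero]
    exact Iff.mpr integrableOn_Ici_iff_integrableOn_Ioi hIoi
  have gint : Integrable g := by
    rw [← integrableOn_univ, ← Iic_union_Ioi (a := (0:ℝ))]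
    exact hIic.union hIoi
  apply gint.mono' (cont_pow_sech n).aestronglyMeasurable
  filter_upwards with x
  rw [Real.norm_eq_abs, abs_mul, abs_pow, abs_inv, abs_of_pos (Real.cosh_pos _)]

lemma mom_sech (k : ℕ) (hk : k ≠ 0) {S : ℝ}
    (hS : HasSum (fun j : ℕ => (-1:ℝ)^j/(2*(j:ℝ)+1)^(2*k+1)) S) :
    ∫ x : ℝ, x^(2*k) * (Real.cosh (π * x / 2))⁻¹
      = 4 * (2*k).factorial * (2/π)^(2*k+1) * S := by
  have hπ := Real.pi_pos
  set b : ℕ → ℝ := fun j => (2*(j:ℝ)+1) * (π/2) with hb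
  have hbpos : ∀ j, 0 < b j := fun j => by positivity
  set F : ℕ → ℝ → ℝ :=
    fun j x => (2*(-1:ℝ)^j) * (x^(2*k) * Real.exp (-(b j) * x)) with hF
  have hF_int : ∀ j, Integrable (F j) (volume.restrict (Ioi 0)) :=
    fun j => (intOn_pow_exp (2*k) (hbpos j)).const_mul _
  have hnorm : ∀ j, (∫ x in Ioi (0:ℝ), ‖F j x‖)
      = 2 * (((2*k).factorial : ℝ) / (b j)^(2*k+1)) := by
    intro j
    rw [show (∫ x in Ioi (0:ℝ), ‖F j x‖)
        = ∫ x in Ioi (0:ℝ), 2 * (x^(2*k) * Real.exp (-(b j) * x)) from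
      setIntegral_congr_fun measurableSet_Ioi (fun x hx => by
        have hx0 : (0:ℝ) < x := hx
        simp only [F]
        rw [Real.norm_eq_abs, abs_mul, abs_mul, abs_two, abs_pow, abs_neg, abs_one,
          one_pow, mul_one, abs_mul, abs_pow, abs_of_pos hx0,
          abs_of_pos (Real.exp_pos _)])]
    rw [MeasureTheory.integral_const_mul, int_pow_exp (2*k) (hbpos j)]
  have hF_sum : Summable fun j => ∫ x in Ioi (0:ℝ), ‖F j x‖ := by
    simp only [hnorm]
    have s1 : Summable (fun n : ℕ => 1/((n:ℝ))^2) := by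
      simpa using Real.summable_one_div_nat_pow.mpr (by norm_num : 1 < 2)
    have s2 : Summable (fun j : ℕ => 1/((j:ℝ)+1)^2) := by
      have := (summable_nat_add_iff 1).mpr s1
      simpa using this
    refine Summable.of_nonneg_of_le (fun j => by positivity) (fun j => ?_)
      (s2.mul_left (2 * ((2*k).factorial : ℝ)))
    have hj1 : ((j:ℝ)+1)^2 ≤ (b j)^(2*k+1) := by
      have e1 : (j:ℝ)+1 ≤ b j := by
        have h2pi : (2:ℝ) ≤ π := Real.two_le_pi
        simp only [hb]
        nlinarith [Nat.cast_nonneg (α := ℝ) j]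
      calc ((j:ℝ)+1)^2 ≤ ((j:ℝ)+1)^(2*k+1) := by
            apply pow_le_pow_right₀ (by have := Nat.cast_nonneg (α := ℝ) j; linarith)
            omega
        _ ≤ (b j)^(2*k+1) := by
            apply pow_le_pow_left₀ (by positivity) e1
    calc 2 * (((2*k).factorial : ℝ) / (b j)^(2*k+1))
        = (2 * ((2*k).factorial : ℝ)) * (1/(b j)^(2*k+1)) := by ring
      _ ≤ (2 * ((2*k).factorial : ℝ)) * (1/((j:ℝ)+1)^2) := by
          apply mul_le_mul_of_nonneg_left _ (by positivity)
          apply one_div_le_one_div_of_le (by positivity) hj1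
  have h1 := integral_tsum_of_summable_integral_norm hF_int hF_sum
  have h2 : (∫ x in Ioi (0:ℝ), ∑' j, F j x)
      = ∫ x in Ioi (0:ℝ), x^(2*k) * (Real.cosh (π * x / 2))⁻¹ := by
    apply setIntegral_congr_fun measurableSet_Ioi
    intro x hx
    have hx0 : (0:ℝ) < x := hx
    show (∑' j, F j x) = x^(2*k) * (Real.cosh (π * x / 2))⁻¹
    rw [← ((hasSum_sech hx0).mul_left (x^(2*k))).tsum_eq]
    apply tsum_congr
    intro j
    simp only [F, hb]
    ring
  have h3 : ∀ j, (∫ x in Ioi (0:ℝ), F j x)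
      = (2*(-1:ℝ)^j) * (((2*k).factorial : ℝ) / (b j)^(2*k+1)) := by
    intro j
    simp only [F]
    rw [MeasureTheory.integral_const_mul, int_pow_exp (2*k) (hbpos j)]
  have hterm : ∀ j : ℕ, (2*(-1:ℝ)^j) * (((2*k).factorial : ℝ)/(b j)^(2*k+1))
      = (2 * (((2*k).factorial : ℝ) * (2/π)^(2*k+1))) * ((-1:ℝ)^j/(2*(j:ℝ)+1)^(2*k+1)) := by
    intro j
    simp only [hb]
    have h2j : (2*(j:ℝ)+1) ≠ 0 := by positivity
    rw [mul_pow, div_pow, div_pow]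
    field_simp
  have hIoi_val : (∫ x in Ioi (0:ℝ), x^(2*k) * (Real.cosh (π * x / 2))⁻¹)
      = 2 * (((2*k).factorial : ℝ) * (2/π)^(2*k+1)) * S := by
    rw [← h2, ← h1]
    rw [tsum_congr (fun j => (h3 j).trans (hterm j))]
    exact (hS.mul_left _).tsum_eq
  have heven : (fun x : ℝ => x^(2*k) * (Real.cosh (π * x / 2))⁻¹)
      = fun x : ℝ => |x|^(2*k) * (Real.cosh (π * |x| / 2))⁻¹ := by
    funext x
    rw [cosh_half_abs, pow_mul, pow_mul, sq_abs]
  rw [heven,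
    integral_comp_abs (f := fun y : ℝ => y^(2*k) * (Real.cosh (π * y / 2))⁻¹),
    hIoi_val]
  ring


/-! ### Moment values -/

lemma integral_odd {f : ℝ → ℝ} (hf : ∀ x, f (-x) = -f x) : ∫ x : ℝ, f x = 0 := by
  have h : (∫ x : ℝ, f (-x)) = ∫ x : ℝ, f x :=
    MeasureTheory.integral_neg_eq_self f volume
  have h2 : (∫ x : ℝ, f (-x)) = -∫ x : ℝ, f x := by
    rw [show (fun x : ℝ => f (-x)) = fun x => -f x from funext hf, integral_neg]
  rw [h2] at h
  linarith

lemma M2 : ∫ x : ℝ, x^2 * (Real.cosh (π * x / 2))⁻¹ = 2 := by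
  have h := mom_sech 1 one_ne_zero hasSum_beta3
  norm_num [Nat.factorial] at h
  rw [h, div_pow]
  have : (π:ℝ) ≠ 0 := Real.pi_pos.ne'
  field_simp
  ring

lemma M4 : ∫ x : ℝ, x^4 * (Real.cosh (π * x / 2))⁻¹ = 10 := by
  have h := mom_sech 2 two_ne_zero hasSum_beta5
  norm_num [Nat.factorial] at h
  rw [h, div_pow]
  have : (π:ℝ) ≠ 0 := Real.pi_pos.ne'
  field_simp
  ring

lemma M6 : ∫ x : ℝ, x^6 * (Real.cosh (π * x / 2))⁻¹ = 122 := by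
  have h := mom_sech 3 three_ne_zero hasSum_beta7
  norm_num [Nat.factorial] at h
  rw [h, div_pow]
  have : (π:ℝ) ≠ 0 := Real.pi_pos.ne'
  field_simp
  ring

lemma M8 : ∫ x : ℝ, x^8 * (Real.cosh (π * x / 2))⁻¹ = 2770 := by
  have h := mom_sech 4 four_ne_zero hasSum_beta9
  norm_num [Nat.factorial] at h
  rw [h, div_pow]
  have : (π:ℝ) ≠ 0 := Real.pi_pos.ne'
  field_simp
  ring

end GCHSAux

theorem gchs_moments {β : ℝ} (h0 : 0 ≤ β) (h1 : β ≤ 14.4) :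
    (∫ x : ℝ, x * gchs x β = 0) ∧
    (∫ x : ℝ, x ^ 2 * gchs x β = 1) ∧
    (∫ x : ℝ, x ^ 4 * gchs x β = 5 + β) := by
  refine ⟨?_, ?_, ?_⟩
  · apply GCHSAux.integral_odd
    intro x
    simp only [gchs, hsDensity]
    rw [show Real.pi * (-x) / 2 = -(Real.pi * x / 2) by ring, Real.cosh_neg]
    ring
  · have e : (fun x : ℝ => x^2 * gchs x β) = fun x =>
        ((1+9*(β/576))/2) * (x^2*(Real.cosh (π*x/2))⁻¹)
        + (((-7)*(β/576)) * (x^4*(Real.cosh (π*x/2))⁻¹)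
        + ((β/576)/2) * (x^6*(Real.cosh (π*x/2))⁻¹)) := by
      funext x
      simp only [gchs, hsDensity]
      ring
    have hA : Integrable (fun x : ℝ => ((1+9*(β/576))/2) * (x^2*(Real.cosh (π*x/2))⁻¹)) :=
      (GCHSAux.integrable_pow_sech 2).const_mul _
    have hB : Integrable (fun x : ℝ => ((-7)*(β/576)) * (x^4*(Real.cosh (π*x/2))⁻¹)) :=
      (GCHSAux.integrable_pow_sech 4).const_mul _
    have hC : Integrable (fun x : ℝ => ((β/576)/2) * (x^6*(Real.cosh (π*x/2))⁻¹)) :=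
      (GCHSAux.integrable_pow_sech 6).const_mul _
    have hBC : Integrable (fun x : ℝ => ((-7)*(β/576)) * (x^4*(Real.cosh (π*x/2))⁻¹)
        + ((β/576)/2) * (x^6*(Real.cosh (π*x/2))⁻¹)) := hB.add hC
    rw [e, integral_add hA hBC, integral_add hB hC,
      MeasureTheory.integral_const_mul, MeasureTheory.integral_const_mul,
      MeasureTheory.integral_const_mul, GCHSAux.M2, GCHSAux.M4, GCHSAux.M6]
    ring
  · have e : (fun x : ℝ => x^4 * gchs x β) = fun x =>
        ((1+9*(β/576))/2) * (x^4*(Real.cosh (π*x/2))⁻¹)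
        + (((-7)*(β/576)) * (x^6*(Real.cosh (π*x/2))⁻¹)
        + ((β/576)/2) * (x^8*(Real.cosh (π*x/2))⁻¹)) := by
      funext x
      simp only [gchs, hsDensity]
      ring
    have hA : Integrable (fun x : ℝ => ((1+9*(β/576))/2) * (x^4*(Real.cosh (π*x/2))⁻¹)) :=
      (GCHSAux.integrable_pow_sech 4).const_mul _
    have hB : Integrable (fun x : ℝ => ((-7)*(β/576)) * (x^6*(Real.cosh (π*x/2))⁻¹)) :=
      (GCHSAux.integrable_pow_sech 6).const_mul _
    have hC : Integrable (fun x : ℝ => ((β/576)/2) * (x^8*(Real.cosh (π*x/2))⁻¹)) :=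
      (GCHSAux.integrable_pow_sech 8).const_mul _
    have hBC : Integrable (fun x : ℝ => ((-7)*(β/576)) * (x^6*(Real.cosh (π*x/2))⁻¹)
        + ((β/576)/2) * (x^8*(Real.cosh (π*x/2))⁻¹)) := hB.add hC
    rw [e, integral_add hA hBC, integral_add hB hC,
      MeasureTheory.integral_const_mul, MeasureTheory.integral_const_mul,
      MeasureTheory.integral_const_mul, GCHSAux.M4, GCHSAux.M6, GCHSAux.M8]
    ring
end

section
/- The characteristic function of the standardized hyperbolic secant distribution is sech(ω): ∫_{-∞}^{∞} e^{iωx} · (1/2)·sech(πx/2) dx = sech(ω) for all real ω. -/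
open MeasureTheory Real Complex

noncomputable def lgt (x : ℝ) : ℝ := Real.exp (Real.pi * x) / (1 + Real.exp (Real.pi * x))

lemma lgt_mem (x : ℝ) : lgt x ∈ Set.Ioo (0:ℝ) 1 := by
  have h : 0 < Real.exp (Real.pi * x) := Real.exp_pos _
  unfold lgt
  constructor
  · exact div_pos h (by linarith)
  · rw [div_lt_one (by linarith)]; linarith

lemma lgt_hasDeriv (x : ℝ) :
    HasDerivAt lgt (Real.pi * (lgt x * (1 - lgt x))) x := by
  have h : 0 < Real.exp (Real.pi * x) := Real.exp_pos _
  have he : HasDerivAt (fun x => Real.exp (Real.pi * x)) (Real.pi * Real.exp (Real.pi * x)) x := by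
    simpa [mul_comm] using ((hasDerivAt_id x).const_mul Real.pi).exp
  have := he.div (he.const_add 1) (by positivity)
  refine this.congr_deriv ?_
  have h1 : (1:ℝ) - lgt x = 1 / (1 + Real.exp (Real.pi * x)) := by
    unfold lgt; field_simp; ring
  rw [h1]; unfold lgt; field_simp; ring

lemma lgt_strictMono : StrictMono lgt := by
  apply strictMono_of_deriv_pos
  intro x
  rw [(lgt_hasDeriv x).deriv]
  have h := lgt_mem x
  have := Real.pi_pos
  have : 0 < lgt x * (1 - lgt x) := mul_pos h.1 (by linarith [h.2])
  positivity

lemma lgt_range : Set.range lgt = Set.Ioo (0:ℝ) 1 := by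
  apply Set.eq_of_subset_of_subset
  · rintro _ ⟨x, rfl⟩; exact lgt_mem x
  · rintro u ⟨hu0, hu1⟩
    refine ⟨Real.log (u / (1 - u)) / Real.pi, ?_⟩
    have hpi := Real.pi_pos
    have h1u : 0 < 1 - u := by linarith
    have : Real.exp (Real.pi * (Real.log (u / (1 - u)) / Real.pi)) = u / (1 - u) := by
      rw [mul_div_cancel₀ _ (ne_of_gt hpi), Real.exp_log (by positivity)]
    unfold lgt
    rw [this]; field_simp; ring

lemma hden (x : ℝ) : hsDensity x
    = Real.exp (Real.pi * x / 2) / (1 + Real.exp (Real.pi * x)) := by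
  unfold hsDensity
  rw [Real.cosh_eq]
  set y := Real.pi * x / 2 with hy
  have h2 : Real.exp (Real.pi * x) = Real.exp y * Real.exp y := by
    rw [← Real.exp_add, hy]; ring_nf
  rw [h2, Real.exp_neg]
  have e1 := Real.exp_pos y
  have e2 : (0:ℝ) < 1 + Real.exp y * Real.exp y := by positivity
  field_simp
  ring


lemma key (ω x : ℝ) :
    |Real.pi * (lgt x * (1 - lgt x))| •
      ((Real.pi : ℂ)⁻¹ * (((lgt x : ℝ) : ℂ) ^ (((1:ℂ)/2 + Complex.I * ω / Real.pi) - 1) *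
        ((1:ℂ) - (lgt x : ℝ)) ^ (-((1:ℂ)/2 + Complex.I * ω / Real.pi))))
      = Complex.exp (Complex.I * ω * x) * (hsDensity x : ℂ) := by
  obtain ⟨hu0, hu1⟩ := lgt_mem x
  set u := lgt x with hudef
  set t := Real.exp (Real.pi * x) with htdef
  have ht : 0 < t := Real.exp_pos _
  have h1t : (0:ℝ) < 1 + t := by linarith
  have hpi := Real.pi_pos
  set s : ℂ := (1:ℂ)/2 + Complex.I * ω / Real.pi with hs
  -- logs
  have hlogu : Real.log u = Real.pi * x - Real.log (1 + t) := by
    rw [hudef, lgt, ← htdef, Real.log_div (ne_of_gt ht) (ne_of_gt h1t), Real.log_exp]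
  have h1u : (1:ℝ) - u = 1 / (1 + t) := by
    rw [hudef, lgt, ← htdef]; field_simp; ring
  have hlog1u : Real.log (1 - u) = -Real.log (1 + t) := by
    rw [h1u, Real.log_div one_ne_zero (ne_of_gt h1t), Real.log_one, zero_sub]
  -- cpow to exp
  have hc1 : ((u:ℂ)) ^ (s - 1) = Complex.exp ((Real.log u : ℝ) * (s - 1)) := by
    rw [Complex.cpow_def_of_ne_zero (by exact_mod_cast ne_of_gt hu0),
      Complex.ofReal_log hu0.le]
  have hc2 : ((1:ℂ) - (u:ℂ)) ^ (-s) = Complex.exp ((Real.log (1 - u) : ℝ) * (-s)) := by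
    have h : ((1:ℂ) - (u:ℂ)) = ((1 - u : ℝ) : ℂ) := by push_cast; ring
    rw [h, Complex.cpow_def_of_ne_zero (by exact_mod_cast ne_of_gt (by linarith : (0:ℝ) < 1 - u)),
      Complex.ofReal_log (by linarith)]
  rw [hc1, hc2, ← Complex.exp_add]
  -- exponent simplification
  set A := Real.log (1 + t) with hA
  have hexp : ((Real.log u : ℝ) : ℂ) * (s - 1) + ((Real.log (1 - u) : ℝ) : ℂ) * (-s)
      = Complex.I * ω * x + (A : ℂ) + (-(Real.pi * x / 2) : ℝ) := by
    rw [hlogu, hlog1u, hs]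
    have hpne : (Real.pi : ℂ) ≠ 0 := by exact_mod_cast ne_of_gt hpi
    push_cast
    field_simp
    ring
  rw [hexp, Complex.exp_add, Complex.exp_add, ← Complex.ofReal_exp, Real.exp_log h1t,
    ← Complex.ofReal_exp]
  -- now algebra
  have habs : |Real.pi * (u * (1 - u))| = Real.pi * (u * (1 - u)) := by
    apply abs_of_pos; have : 0 < u * (1 - u) := mul_pos hu0 (by linarith); positivity
  rw [habs, hden, ← htdef]
  have hu' : u = t / (1 + t) := by rw [hudef, lgt, ← htdef]
  have hpne : (Real.pi : ℂ) ≠ 0 := by exact_mod_cast ne_of_gt hpi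
  have h1tc : ((1 : ℂ) + t) ≠ 0 := by exact_mod_cast ne_of_gt h1t
  have hval : ((Real.exp (-(Real.pi * x / 2)) : ℝ) : ℂ) * t = ((Real.exp (Real.pi * x / 2) : ℝ) : ℂ) := by
    rw [← Complex.ofReal_mul, ← Real.exp_add]
    norm_cast
    congr 1
    ring
  rw [real_smul, h1u, hu']
  have hP : Complex.exp (-((Real.pi:ℂ) * x) / 2) * Complex.exp ((Real.pi:ℂ) * x / 2) = 1 := by
    rw [← Complex.exp_add]
    have h9 : -((Real.pi:ℂ) * x) / 2 + (Real.pi:ℂ) * x / 2 = 0 := by ring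
    rw [h9, Complex.exp_zero]
  have hT : Complex.exp ((Real.pi:ℂ) * x / 2) * Complex.exp ((Real.pi:ℂ) * x / 2) = (t:ℂ) := by
    rw [← Complex.exp_add, htdef]
    push_cast
    congr 1
    ring
  push_cast [Complex.ofReal_exp]
  field_simp
  rw [show -((Real.pi:ℂ) * x / 2) = -((Real.pi:ℂ) * x) / 2 by ring]
  linear_combination (Complex.exp ((Real.pi:ℂ) * x / 2) * hP - Complex.exp (-((Real.pi:ℂ) * x) / 2) * hT)


theorem hs_characteristic_function (ω : ℝ) :
    ∫ x : ℝ, Complex.exp (Complex.I * ω * x) * (hsDensity x : ℂ)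
      = ((Real.cosh ω)⁻¹ : ℝ) := by
  have hpi := Real.pi_pos
  set s : ℂ := (1:ℂ)/2 + Complex.I * ω / Real.pi with hs
  set g : ℝ → ℂ := fun u => (Real.pi : ℂ)⁻¹ * (((u : ℝ) : ℂ) ^ (s - 1) *
    ((1:ℂ) - (u : ℝ)) ^ (-s)) with hg
  have step1 : ∫ x : ℝ, Complex.exp (Complex.I * ω * x) * (hsDensity x : ℂ)
      = ∫ u in Set.Ioo (0:ℝ) 1, g u := by
    rw [← setIntegral_univ (f := fun x : ℝ => Complex.exp (Complex.I * ω * x) * (hsDensity x : ℂ))]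
    have himg : lgt '' Set.univ = Set.Ioo (0:ℝ) 1 := by
      rw [Set.image_univ, lgt_range]
    rw [← himg,
      MeasureTheory.integral_image_eq_integral_abs_deriv_smul MeasurableSet.univ
        (fun x _ => (lgt_hasDeriv x).hasDerivWithinAt) (lgt_strictMono.injective.injOn) g]
    apply integral_congr_ae
    filter_upwards with x
    exact (key ω x).symm
  have step2 : ∫ u in Set.Ioo (0:ℝ) 1, g u
      = (Real.pi : ℂ)⁻¹ * Complex.betaIntegral s (1 - s) := by
    rw [hg, MeasureTheory.integral_const_mul, Complex.betaIntegral,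
      intervalIntegral.integral_of_le (by norm_num : (0:ℝ) ≤ 1),
      ← MeasureTheory.integral_Ioc_eq_integral_Ioo]
    norm_num
  have hres : s.re = 1/2 := by
    rw [hs]
    simp [Complex.div_re, Complex.ofReal_re]
  have step3 : Complex.betaIntegral s (1 - s) = ↑Real.pi / Complex.sin (Real.pi * s) := by
    rw [← Complex.Gamma_mul_Gamma_one_sub s]
    have h := Complex.Gamma_mul_Gamma_eq_betaIntegral (s := s) (t := 1 - s)
      (by rw [hres]; norm_num) (by rw [Complex.sub_re, Complex.one_re, hres]; norm_num)
    rw [h]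
    norm_num [Complex.Gamma_one]
  have step4 : Complex.sin (Real.pi * s) = (Real.cosh ω : ℂ) := by
    have : (Real.pi : ℂ) * s = Real.pi / 2 + ω * Complex.I := by
      rw [hs]
      have hpne : (Real.pi : ℂ) ≠ 0 := by exact_mod_cast ne_of_gt hpi
      field_simp
    rw [this, Complex.sin_add, Complex.sin_pi_div_two, Complex.cos_pi_div_two,
      Complex.cos_mul_I, Complex.ofReal_cosh]
    ring
  rw [step1, step2, step3, step4]
  have hcosh : (Real.cosh ω : ℂ) ≠ 0 := by
    exact_mod_cast ne_of_gt (Real.cosh_pos (x := ω))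
  have hpne : (Real.pi : ℂ) ≠ 0 := by exact_mod_cast ne_of_gt hpi
  push_cast
  field_simp
end

section
/- The density of the sum of two independent standardized hyperbolic secant random variables is g(y) = (y/2)·csch(πy/2); equivalently, the convolution of f(x)=(1/2)sech(πx/2) with itself equals (y/2)·csch(πy/2), where the value at y=0 is taken as the limit 1/π. -/
open MeasureTheory Real

/-- The convoluted linear hyperbolic density, with the removable singularity
at `0` filled in by the limit value `1/π`. -/
noncomputable def clhDensity (y : ℝ) : ℝ :=
  if y = 0 then 1 / Real.pi else (y / 2) * (Real.sinh (Real.pi * y / 2))⁻¹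

open Filter Topology

lemma cosh_quad (x : ℝ) : 1 + x ^ 2 ≤ Real.cosh (Real.pi * x / 2) := by
  have h2 : Real.pi * x / 2 = 2 * (Real.pi * x / 4) := by ring
  rw [h2, Real.cosh_two_mul, Real.cosh_sq]
  have hu : (Real.pi * x / 4) ^ 2 ≤ Real.sinh (Real.pi * x / 4) ^ 2 := by
    have h := Real.self_le_sinh_iff.2 (abs_nonneg (Real.pi * x / 4))
    calc (Real.pi * x / 4) ^ 2 = |Real.pi * x / 4| ^ 2 := (sq_abs _).symm
      _ ≤ (Real.sinh |Real.pi * x / 4|) ^ 2 := by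
          exact pow_le_pow_left₀ (abs_nonneg _) h 2
      _ = |Real.sinh (Real.pi * x / 4)| ^ 2 := by rw [Real.abs_sinh]
      _ = Real.sinh (Real.pi * x / 4) ^ 2 := sq_abs _
  have hpi : (9:ℝ) ≤ Real.pi ^ 2 := by nlinarith [Real.pi_gt_three]
  have h9 : (9:ℝ) * x ^ 2 ≤ Real.pi ^ 2 * x ^ 2 := by nlinarith [sq_nonneg x]
  nlinarith [hu, h9, sq_nonneg x]

lemma hs_continuous : Continuous hsDensity := by
  unfold hsDensity
  exact continuous_const.mul ((Real.continuous_cosh.comp (by continuity)).inv₀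
    (fun x => (Real.cosh_pos _).ne'))

lemma integrable_h (y : ℝ) :
    Integrable (fun x => hsDensity x * hsDensity (y - x)) := by
  apply Integrable.mono' (integrable_inv_one_add_sq.const_mul (1/4))
  · exact (hs_continuous.mul (hs_continuous.comp
      (continuous_const.sub continuous_id))).aestronglyMeasurable
  · refine Filter.Eventually.of_forall (fun x => ?_)
    have hpos : 0 ≤ hsDensity x * hsDensity (y - x) := by
      unfold hsDensity; positivity
    rw [Real.norm_eq_abs, abs_of_nonneg hpos]
    unfold hsDensity
    have h1 : (Real.cosh (Real.pi * x / 2))⁻¹ ≤ (1 + x ^ 2)⁻¹ :=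
      inv_anti₀ (by positivity) (cosh_quad x)
    have h2 : (Real.cosh (Real.pi * (y - x) / 2))⁻¹ ≤ 1 :=
      inv_le_one_of_one_le₀ (Real.one_le_cosh _)
    have h3 : (0:ℝ) < (1 + x ^ 2)⁻¹ := by positivity
    have h4 : (0:ℝ) ≤ (Real.cosh (Real.pi * x / 2))⁻¹ := by positivity
    calc 1 / 2 * (Real.cosh (Real.pi * x / 2))⁻¹ *
          (1 / 2 * (Real.cosh (Real.pi * (y - x) / 2))⁻¹)
        = 1 / 4 * ((Real.cosh (Real.pi * x / 2))⁻¹ *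
            (Real.cosh (Real.pi * (y - x) / 2))⁻¹) := by ring
      _ ≤ 1 / 4 * ((1 + x ^ 2)⁻¹ * 1) := by
          have := mul_le_mul h1 h2 (by positivity) (le_of_lt h3)
          linarith
      _ = 1 / 4 * (1 + x ^ 2)⁻¹ := by ring

lemma tendsto_tanh_top :
    Tendsto (fun t => Real.sinh t / Real.cosh t) atTop (𝓝 1) := by
  have key : ∀ t : ℝ, Real.sinh t / Real.cosh t = 1 - 2 / (Real.exp (2 * t) + 1) := by
    intro t
    have e1 : Real.exp t * Real.exp t = Real.exp (2 * t) := by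
      rw [← Real.exp_add]; congr 1; ring
    rw [Real.sinh_eq, Real.cosh_eq, Real.exp_neg]
    have h0 : Real.exp t ≠ 0 := Real.exp_ne_zero t
    have h1 : Real.exp (2 * t) + 1 ≠ 0 := by positivity
    field_simp
    linear_combination 2 * e1
  have h3 : Tendsto (fun t : ℝ => Real.exp (2 * t) + 1) atTop atTop :=
    (Real.tendsto_exp_atTop.comp
      (tendsto_id.const_mul_atTop (two_pos (α := ℝ)))).atTop_add tendsto_const_nhds
  have h2 : Tendsto (fun t : ℝ => 1 - 2 / (Real.exp (2 * t) + 1)) atTop (𝓝 (1 - 0)) := by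
    refine tendsto_const_nhds.sub ?_
    simpa [div_eq_mul_inv] using h3.inv_tendsto_atTop.const_mul 2
  simp only [key]
  simpa using h2

lemma tendsto_tanh_bot :
    Tendsto (fun t => Real.sinh t / Real.cosh t) atBot (𝓝 (-1)) := by
  have h := (tendsto_tanh_top.comp tendsto_neg_atBot_atTop).neg
  simp only [Function.comp_def] at h
  simpa [Real.sinh_neg, Real.cosh_neg, neg_div] using h

lemma tendsto_logcosh :
    Tendsto (fun t => Real.log (Real.cosh t) - t) atTop (𝓝 (-Real.log 2)) := by
  have key : ∀ t : ℝ, Real.log (Real.cosh t) - t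
      = Real.log ((1 + Real.exp (-(2 * t))) / 2) := by
    intro t
    have e1 : Real.exp t * Real.exp (-(2 * t)) = Real.exp (-t) := by
      rw [← Real.exp_add]; congr 1; ring
    have h1 : Real.cosh t = Real.exp t * ((1 + Real.exp (-(2 * t))) / 2) := by
      rw [Real.cosh_eq]; field_simp; rw [show t * 2 = 2 * t by ring]; linear_combination -e1
    rw [h1, Real.log_mul (Real.exp_ne_zero t) (by positivity), Real.log_exp]; ring
  have h3 : Tendsto (fun t : ℝ => -(2 * t)) atTop atBot :=
    tendsto_neg_atTop_atBot.comp (tendsto_id.const_mul_atTop (two_pos (α := ℝ)))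
  have h2 : Tendsto (fun t : ℝ => (1 + Real.exp (-(2 * t))) / 2) atTop (𝓝 ((1 + 0) / 2)) :=
    (tendsto_const_nhds.add (Real.tendsto_exp_atBot.comp h3)).div_const 2
  have h4 : Tendsto (fun t : ℝ => Real.log ((1 + Real.exp (-(2 * t))) / 2)) atTop
      (𝓝 (Real.log ((1 + 0) / 2))) :=
    ((Real.continuousAt_log (by norm_num)).tendsto).comp h2
  simp only [key]
  convert h4 using 2
  rw [show ((1:ℝ)+0)/2 = 2⁻¹ by norm_num, Real.log_inv]

lemma tendsto_logcosh_bot :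
    Tendsto (fun t => Real.log (Real.cosh t) + t) atBot (𝓝 (-Real.log 2)) := by
  have h := tendsto_logcosh.comp tendsto_neg_atBot_atTop
  simp only [Function.comp_def] at h
  simpa [Real.cosh_neg, sub_neg_eq_add] using h

theorem hs_self_convolution (y : ℝ) :
    ∫ x : ℝ, hsDensity x * hsDensity (y - x) = clhDensity y := by
  by_cases hy : y = 0
  · subst hy
    rw [clhDensity, if_pos rfl]
    have hderiv : ∀ x : ℝ, HasDerivAt
        (fun x => Real.sinh (Real.pi * x / 2) / Real.cosh (Real.pi * x / 2) / (2 * Real.pi))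
        (hsDensity x * hsDensity (0 - x)) x := by
      intro x
      have hlin : HasDerivAt (fun x : ℝ => Real.pi * x / 2) (Real.pi / 2) x := by
        simpa using ((hasDerivAt_id x).const_mul Real.pi).div_const 2
      have hsin := (Real.hasDerivAt_sinh (Real.pi * x / 2)).comp x hlin
      have hcos := (Real.hasDerivAt_cosh (Real.pi * x / 2)).comp x hlin
      have hne : Real.cosh (Real.pi * x / 2) ≠ 0 := (Real.cosh_pos _).ne'
      have h := (hsin.div hcos hne).div_const (2 * Real.pi)
      refine h.congr_deriv ?_; symm
      simp only [Function.comp_apply]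
      unfold hsDensity
      rw [show Real.pi * (0 - x) / 2 = -(Real.pi * x / 2) by ring, Real.cosh_neg]
      have key := Real.cosh_sq_sub_sinh_sq (Real.pi * x / 2)
      have hpi : Real.pi ≠ 0 := Real.pi_ne_zero
      field_simp
      linear_combination -key
    have hlt : Tendsto (fun x : ℝ => Real.pi * x / 2) atTop atTop :=
      (tendsto_id.const_mul_atTop Real.pi_pos).atTop_div_const two_pos
    have hlb : Tendsto (fun x : ℝ => Real.pi * x / 2) atBot atBot :=
      (tendsto_id.const_mul_atBot Real.pi_pos).atBot_div_const two_pos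
    have Ttop : Tendsto
        (fun x => Real.sinh (Real.pi * x / 2) / Real.cosh (Real.pi * x / 2) / (2 * Real.pi))
        atTop (𝓝 (1 / (2 * Real.pi))) := by
      have := (tendsto_tanh_top.comp hlt).div_const (2 * Real.pi)
      simpa [Function.comp_def] using this
    have Tbot : Tendsto
        (fun x => Real.sinh (Real.pi * x / 2) / Real.cosh (Real.pi * x / 2) / (2 * Real.pi))
        atBot (𝓝 ((-1) / (2 * Real.pi))) := by
      have := (tendsto_tanh_bot.comp hlb).div_const (2 * Real.pi)
      simpa [Function.comp_def] using this
    rw [integral_of_hasDerivAt_of_tendsto hderiv (integrable_h 0) Tbot Ttop]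
    have hpi : Real.pi ≠ 0 := Real.pi_ne_zero
    rw [div_sub_div_same]
    norm_num
    rw [eq_comm, inv_eq_iff_eq_inv, eq_comm, inv_eq_iff_eq_inv]
    field_simp
  · rw [clhDensity, if_neg hy]
    set s := Real.sinh (Real.pi * y / 2) with hs_def
    have hs : s ≠ 0 := by
      rw [hs_def]
      exact Real.sinh_ne_zero.2 (by
        simp [Real.pi_ne_zero, hy, mul_ne_zero, div_ne_zero])
    have hpi : Real.pi ≠ 0 := Real.pi_ne_zero
    have hderiv : ∀ x : ℝ, HasDerivAt
        (fun x => (Real.log (Real.cosh (Real.pi * x / 2))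
          - Real.log (Real.cosh (Real.pi * (y - x) / 2))) / (2 * Real.pi * s))
        (hsDensity x * hsDensity (y - x)) x := by
      intro x
      have hlin : HasDerivAt (fun x : ℝ => Real.pi * x / 2) (Real.pi / 2) x := by
        simpa using ((hasDerivAt_id x).const_mul Real.pi).div_const 2
      have hlin2 : HasDerivAt (fun x : ℝ => Real.pi * (y - x) / 2) (-Real.pi / 2) x := by
        simpa using (((hasDerivAt_id x).const_sub y).const_mul Real.pi).div_const 2
      have hne1 : Real.cosh (Real.pi * x / 2) ≠ 0 := (Real.cosh_pos _).ne'
      have hne2 : Real.cosh (Real.pi * (y - x) / 2) ≠ 0 := (Real.cosh_pos _).ne'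
      have d1 := (Real.hasDerivAt_log hne1).comp x ((Real.hasDerivAt_cosh _).comp x hlin)
      have d2 := (Real.hasDerivAt_log hne2).comp x ((Real.hasDerivAt_cosh _).comp x hlin2)
      have h := (d1.sub d2).div_const (2 * Real.pi * s)
      refine h.congr_deriv ?_; symm
      unfold hsDensity
      have key : s = Real.sinh (Real.pi * x / 2) * Real.cosh (Real.pi * (y - x) / 2)
          + Real.cosh (Real.pi * x / 2) * Real.sinh (Real.pi * (y - x) / 2) := by
        rw [hs_def, ← Real.sinh_add]; congr 1; ring
      field_simp
      linear_combination key
    have ltop : ∀ a : ℝ, Tendsto (fun x : ℝ => Real.pi * (x - a) / 2) atTop atTop := by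
      intro a
      have h0 : Tendsto (fun x : ℝ => x - a) atTop atTop := by
        simpa [sub_eq_add_neg] using tendsto_atTop_add_const_right atTop (-a) tendsto_id
      exact (h0.const_mul_atTop Real.pi_pos).atTop_div_const two_pos
    have lbot : ∀ a : ℝ, Tendsto (fun x : ℝ => Real.pi * (x - a) / 2) atBot atBot := by
      intro a
      have h0 : Tendsto (fun x : ℝ => x - a) atBot atBot := by
        simpa [sub_eq_add_neg] using tendsto_atBot_add_const_right atBot (-a) tendsto_id
      exact (h0.const_mul_atBot Real.pi_pos).atBot_div_const two_pos
    have hcosh_flip : ∀ x : ℝ, Real.cosh (Real.pi * (x - y) / 2)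
        = Real.cosh (Real.pi * (y - x) / 2) := fun x => by
      rw [show Real.pi * (x - y) / 2 = -(Real.pi * (y - x) / 2) by ring, Real.cosh_neg]
    have A : Tendsto (fun x : ℝ => Real.log (Real.cosh (Real.pi * x / 2)) - Real.pi * x / 2)
        atTop (𝓝 (-Real.log 2)) := by
      have h := tendsto_logcosh.comp (by simpa using ltop 0)
      simpa [Function.comp_def] using h
    have B : Tendsto (fun x : ℝ => Real.log (Real.cosh (Real.pi * (y - x) / 2))
        - Real.pi * (x - y) / 2) atTop (𝓝 (-Real.log 2)) := by
      have h := tendsto_logcosh.comp (ltop y)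
      simp only [Function.comp_def] at h
      simpa only [hcosh_flip] using h
    have TN : Tendsto (fun x : ℝ => Real.log (Real.cosh (Real.pi * x / 2))
        - Real.log (Real.cosh (Real.pi * (y - x) / 2))) atTop (𝓝 (Real.pi * y / 2)) := by
      have h := (A.sub B).add_const (Real.pi * y / 2)
      have heq : (fun x : ℝ => (Real.log (Real.cosh (Real.pi * x / 2)) - Real.pi * x / 2
          - (Real.log (Real.cosh (Real.pi * (y - x) / 2)) - Real.pi * (x - y) / 2))
          + Real.pi * y / 2)
          = fun x : ℝ => Real.log (Real.cosh (Real.pi * x / 2))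
            - Real.log (Real.cosh (Real.pi * (y - x) / 2)) := by
        funext x; ring
      rw [heq] at h
      simpa using h
    have A' : Tendsto (fun x : ℝ => Real.log (Real.cosh (Real.pi * x / 2)) + Real.pi * x / 2)
        atBot (𝓝 (-Real.log 2)) := by
      have h := tendsto_logcosh_bot.comp (by simpa using lbot 0)
      simpa [Function.comp_def] using h
    have B' : Tendsto (fun x : ℝ => Real.log (Real.cosh (Real.pi * (y - x) / 2))
        + Real.pi * (x - y) / 2) atBot (𝓝 (-Real.log 2)) := by
      have h := tendsto_logcosh_bot.comp (lbot y)
      simp only [Function.comp_def] at h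
      simpa only [hcosh_flip] using h
    have TN' : Tendsto (fun x : ℝ => Real.log (Real.cosh (Real.pi * x / 2))
        - Real.log (Real.cosh (Real.pi * (y - x) / 2))) atBot (𝓝 (-(Real.pi * y / 2))) := by
      have h := (A'.sub B').add_const (-(Real.pi * y / 2))
      have heq : (fun x : ℝ => (Real.log (Real.cosh (Real.pi * x / 2)) + Real.pi * x / 2
          - (Real.log (Real.cosh (Real.pi * (y - x) / 2)) + Real.pi * (x - y) / 2))
          + -(Real.pi * y / 2))
          = fun x : ℝ => Real.log (Real.cosh (Real.pi * x / 2))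
            - Real.log (Real.cosh (Real.pi * (y - x) / 2)) := by
        funext x; ring
      rw [heq] at h
      simpa using h
    have Ttop := TN.div_const (2 * Real.pi * s)
    have Tbot := TN'.div_const (2 * Real.pi * s)
    rw [integral_of_hasDerivAt_of_tendsto hderiv (integrable_h y) Tbot Ttop]
    field_simp
    ring
end

section
/- The density of the sum of three independent standardized hyperbolic secant random variables is g(y) = (1/4)·sech(πy/2)·(y² + 1); equivalently, ∫_{-∞}^{∞} e^{iωy} · (1/4)·sech(πy/2)·(y²+1) dy = sech(ω)³ for all real ω. -/
open MeasureTheory Real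

section SechAux

open Set


lemma beta_reflection (a : ℂ) (h0 : 0 < a.re) (h1 : a.re < 1) :
    ∫ t in Ioo (0:ℝ) 1, (t:ℂ)^(a-1) * ((1-t:ℝ):ℂ)^(-a) = ↑Real.pi / Complex.sin (↑Real.pi * a) := by
  have hb : 0 < (1-a).re := by simp [Complex.sub_re]; linarith
  have h2 := Complex.Gamma_mul_Gamma_eq_betaIntegral h0 hb
  rw [Complex.Gamma_mul_Gamma_one_sub a, show a + (1-a) = 1 by ring, Complex.Gamma_one, one_mul] at h2
  rw [h2, Complex.betaIntegral, intervalIntegral.integral_of_le zero_le_one,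
    MeasureTheory.integral_Ioc_eq_integral_Ioo]
  refine setIntegral_congr_fun measurableSet_Ioo fun t ht => ?_
  push_cast
  rw [show 1 - a - 1 = -a by ring]

lemma image_self_div : (fun t : ℝ => t / (1 - t)) '' Ioo 0 1 = Ioi 0 := by
  ext y
  constructor
  · rintro ⟨t, ⟨h0, h1⟩, rfl⟩
    exact div_pos h0 (by linarith)
  · intro hy
    refine ⟨y / (1 + y), ⟨div_pos hy (by linarith [mem_Ioi.mp hy]), ?_⟩, ?_⟩
    · rw [div_lt_one (by linarith [mem_Ioi.mp hy])]; linarith [mem_Ioi.mp hy]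
    · have hy' : (0:ℝ) < y := hy
      field_simp
      ring

lemma hasDeriv_self_div {t : ℝ} (ht : t ∈ Ioo (0:ℝ) 1) :
    HasDerivWithinAt (fun t : ℝ => t / (1 - t)) ((1-t)⁻¹^2) (Ioo 0 1) t := by
  have h1t : (1:ℝ) - t ≠ 0 := by rcases ht with ⟨_, h⟩; intro h'; linarith
  have := (hasDerivAt_id t).div ((hasDerivAt_id t).const_sub 1) h1t
  simp only [one_mul, id] at this
  have h2 : ((1:ℝ)-t)⁻¹^2 = (1 - t - t*(-1))/(1-t)^2 := by
    rw [show (1:ℝ)-t-t*(-1) = 1 by ring, inv_pow, one_div]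
  rw [h2]
  exact this.hasDerivWithinAt

lemma injOn_self_div : InjOn (fun t : ℝ => t / (1 - t)) (Ioo 0 1) := by
  intro t ht s hs h
  have h1t : (1:ℝ) - t ≠ 0 := by rcases ht with ⟨_, h⟩; intro h'; linarith
  have h1s : (1:ℝ) - s ≠ 0 := by rcases hs with ⟨_, h⟩; intro h'; linarith
  field_simp at h
  linarith


lemma mellin_one_add (a : ℂ) (h0 : 0 < a.re) (h1 : a.re < 1) :
    ∫ x in Ioi (0:ℝ), (x:ℂ)^(a-1) / (1+x) = ↑Real.pi / Complex.sin (↑Real.pi * a) := by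
  rw [← image_self_div,
    integral_image_eq_integral_abs_deriv_smul measurableSet_Ioo
      (fun t ht => hasDeriv_self_div ht) injOn_self_div, ← beta_reflection a h0 h1]
  refine setIntegral_congr_fun measurableSet_Ioo fun t ht => ?_
  obtain ⟨ht0, ht1⟩ := ht
  have h1t : (0:ℝ) < 1 - t := by linarith
  have habs : |(1-t)⁻¹^2| = (1-t)⁻¹^2 := abs_of_pos (by positivity)
  have h1tC : (1:ℂ) - ↑t ≠ 0 := by
    intro h; apply h1t.ne'
    have := congrArg Complex.re h; simpa using this
  have hplus : (1:ℂ) + ↑(t / (1-t)) = ((1-t)⁻¹ : ℝ) := by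
    push_cast
    field_simp
    ring
  have hsplit : ((t / (1-t) : ℝ) : ℂ)^(a-1) = (t:ℂ)^(a-1) * (((1-t:ℝ):ℂ)^(a-1))⁻¹ := by
    rw [div_eq_mul_inv, Complex.ofReal_mul, Complex.mul_cpow_ofReal_nonneg ht0.le (by positivity),
      Complex.ofReal_inv, Complex.inv_cpow]
    rw [Complex.arg_ofReal_of_nonneg h1t.le]
    exact Real.pi_ne_zero.symm
  rw [habs, Complex.real_smul, hsplit, hplus]
  have hne : ((1-t:ℝ):ℂ) ≠ 0 := by
    simp only [ne_eq, Complex.ofReal_eq_zero]; linarith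
  rw [show ((1-t:ℝ):ℂ)^(-a) = (((1-t:ℝ):ℂ)^(a-1))⁻¹ * (((1-t:ℝ):ℂ))⁻¹ by
    rw [← Complex.cpow_neg, ← Complex.cpow_neg_one, ← Complex.cpow_add _ _ hne]; ring_nf]
  have hz : ((1-t:ℝ):ℂ)^(a-1) ≠ 0 := by
    simp only [ne_eq, Complex.cpow_eq_zero_iff, not_and_or, not_not]
    left
    simp only [ne_eq, Complex.ofReal_eq_zero]
    intro h; linarith
  rw [Complex.ofReal_pow, Complex.ofReal_inv, div_inv_eq_mul]
  field_simp


lemma base_fourier (ω : ℝ) :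
    ∫ y : ℝ, Complex.exp (Complex.I * ω * y) * ((2 * Real.cosh (Real.pi * y / 2))⁻¹ : ℝ)
      = (((Real.cosh ω)⁻¹ : ℝ) : ℂ) := by
  set a : ℂ := 1/2 + (ω/Real.pi) * Complex.I with ha
  have hre : a.re = 1/2 := by simp [ha]
  have himg : (fun y : ℝ => Real.exp (Real.pi * y)) '' univ = Ioi 0 := by
    ext x
    simp only [image_univ, mem_range, mem_Ioi]
    constructor
    · rintro ⟨y, rfl⟩; exact Real.exp_pos _
    · intro hx
      exact ⟨Real.log x / Real.pi, by
        rw [mul_div_cancel₀ _ Real.pi_ne_zero, Real.exp_log hx]⟩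
  have hderiv : ∀ y ∈ (univ : Set ℝ), HasDerivWithinAt (fun y : ℝ => Real.exp (Real.pi * y))
      (Real.pi * Real.exp (Real.pi * y)) univ y := by
    intro y _
    have h1 : HasDerivAt (fun y : ℝ => Real.pi * y) (Real.pi * 1) y := (hasDerivAt_id y).const_mul Real.pi
    have := (Real.hasDerivAt_exp (Real.pi * y)).comp y h1
    simp only [mul_one] at this
    rw [mul_comm] at this
    exact this.hasDerivWithinAt
  have hinj : InjOn (fun y : ℝ => Real.exp (Real.pi * y)) univ := by
    intro s _ t _ h
    have := Real.exp_injective h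
    exact mul_left_cancel₀ Real.pi_ne_zero this
  have key := integral_image_eq_integral_abs_deriv_smul (MeasurableSet.univ) hderiv hinj
    (fun x : ℝ => (x:ℂ)^(a-1) / (1+x))
  rw [himg, mellin_one_add a (by rw [hre]; norm_num) (by rw [hre]; norm_num),
    MeasureTheory.setIntegral_univ] at key
  have hpt : ∀ y : ℝ, |Real.pi * Real.exp (Real.pi * y)| •
      (((Real.exp (Real.pi * y) : ℝ):ℂ)^(a-1) / (1 + ((Real.exp (Real.pi * y) : ℝ):ℂ)))
      = ↑Real.pi * (Complex.exp (Complex.I * ω * y) * (((2 * Real.cosh (Real.pi * y / 2))⁻¹ : ℝ):ℂ)) := by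
    intro y
    have habs : |Real.pi * Real.exp (Real.pi * y)| = Real.pi * Real.exp (Real.pi * y) :=
      abs_of_pos (by positivity)
    have hcpow : ((Real.exp (Real.pi * y) : ℝ):ℂ)^(a-1)
        = Complex.exp (Complex.I * ω * y) * Complex.exp (-(↑Real.pi * ↑y/2)) := by
      rw [Complex.cpow_def_of_ne_zero (by simp [Real.exp_ne_zero] : ((Real.exp (Real.pi*y):ℝ):ℂ) ≠ 0)]
      rw [← Complex.ofReal_log (Real.exp_pos _).le, Real.log_exp, ← Complex.exp_add]
      congr 1
      rw [ha]
      have hπ : (Real.pi : ℂ) ≠ 0 := Complex.ofReal_ne_zero.mpr Real.pi_ne_zero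
      push_cast
      field_simp
      ring
    have h1 : Complex.exp (↑Real.pi*↑y/2) * Complex.exp (↑Real.pi*↑y/2)
        = Complex.exp (↑Real.pi*↑y) := by rw [← Complex.exp_add]; ring_nf
    have h2 : Complex.exp (↑Real.pi*↑y/2) * Complex.exp (-(↑Real.pi*↑y/2)) = 1 := by
      rw [← Complex.exp_add]; simp
    have h3 : Complex.exp (↑Real.pi*↑y) * Complex.exp (-(↑Real.pi*↑y/2))
        = Complex.exp (↑Real.pi*↑y/2) := by rw [← Complex.exp_add]; congr 1; ring
    have hcosh : (1 : ℂ) + ((Real.exp (Real.pi * y) : ℝ):ℂ)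
        = Complex.exp (↑Real.pi * ↑y/2) * (2 * Complex.cosh (↑Real.pi * ↑y/2)) := by
      rw [Complex.cosh, Complex.ofReal_exp]
      push_cast
      linear_combination -h1 - h2
    rw [habs, Complex.real_smul, hcpow, hcosh]
    have hcne : Complex.cosh (↑Real.pi * ↑y/2) ≠ 0 := by
      rw [show (↑Real.pi * (y:ℂ)/2) = ((Real.pi * y / 2 : ℝ):ℂ) by push_cast; ring,
        ← Complex.ofReal_cosh]
      simp only [ne_eq, Complex.ofReal_eq_zero]
      exact (Real.cosh_pos _).ne'
    have h3' : Complex.exp (↑Real.pi*↑y) * Complex.exp (-(↑Real.pi*↑y)/2)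
        = Complex.exp (↑Real.pi*↑y/2) := by rw [← Complex.exp_add]; congr 1; ring
    push_cast
    field_simp
    linear_combination h3
  simp only [hpt] at key
  rw [MeasureTheory.integral_const_mul] at key
  have hπ : (Real.pi : ℂ) ≠ 0 := Complex.ofReal_ne_zero.mpr Real.pi_ne_zero
  have hsin : Complex.sin (↑Real.pi * a) = ↑(Real.cosh ω) := by
    rw [show (↑Real.pi : ℂ) * a = ↑Real.pi/2 + ↑ω*Complex.I from by rw [ha]; field_simp]
    rw [Complex.sin_add]
    simp [Complex.cos_mul_I, Complex.ofReal_cosh]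
  rw [hsin] at key
  have hc : ((Real.cosh ω : ℝ):ℂ) ≠ 0 := by
    simp only [ne_eq, Complex.ofReal_eq_zero]; exact (Real.cosh_pos _).ne'
  have h5 := key.symm
  field_simp at h5 ⊢
  congr 1
  rw [Complex.ofReal_div 1 (Real.cosh ω), Complex.ofReal_one, eq_div_iff hc]
  exact h5

lemma integrable_exp_neg_abs' : Integrable (fun y : ℝ => Real.exp (-|y|)) := by
  have h2 : IntegrableOn (fun y : ℝ => Real.exp (-|y|)) (Ioi 0) := by
    apply (exp_neg_integrableOn_Ioi 0 one_pos).congr_fun ?_ measurableSet_Ioi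
    intro x hx
    simp [abs_of_pos (mem_Ioi.mp hx)]
  have h3 : IntegrableOn (fun y : ℝ => Real.exp (-|y|)) (Iic 0) := by
    apply (integrableOn_exp_Iic 0).congr_fun ?_ measurableSet_Iic
    intro x hx
    simp [abs_of_nonpos (mem_Iic.mp hx)]
  have h4 := h3.union h2
  rw [Iic_union_Ioi] at h4
  rwa [← integrableOn_univ]

lemma sech_poly_bound (k : ℕ) (y : ℝ) :
    |y|^k * (Real.cosh (Real.pi*y/2))⁻¹ ≤ 2 * (2^k * k.factorial) * Real.exp (-|y|) := by
  have hinv : (Real.cosh (Real.pi*y/2))⁻¹ ≤ 2 * Real.exp (-((Real.pi/2) * |y|)) := by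
    have hc : Real.exp ((Real.pi/2) * |y|) / 2 ≤ Real.cosh (Real.pi*y/2) := by
      have habs : (Real.pi/2) * |y| = |Real.pi*y/2| := by
        rw [abs_div, abs_mul, abs_of_pos Real.pi_pos, abs_of_pos (by norm_num : (0:ℝ) < 2)]
        ring
      rw [habs, Real.cosh_eq]
      rcases abs_cases (Real.pi*y/2) with ⟨h, _⟩ | ⟨h, _⟩ <;> rw [h] <;>
        [linarith [Real.exp_pos (-(Real.pi*y/2))]; linarith [Real.exp_pos (Real.pi*y/2)]]
    rw [Real.exp_neg]
    have h2 : (0:ℝ) < Real.exp ((Real.pi/2) * |y|) / 2 := by positivity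
    calc (Real.cosh (Real.pi*y/2))⁻¹ ≤ (Real.exp ((Real.pi/2) * |y|) / 2)⁻¹ :=
          inv_anti₀ h2 hc
      _ = 2 * (Real.exp ((Real.pi/2) * |y|))⁻¹ := by rw [inv_div]; ring
  have hpoly : |y|^k ≤ 2^k * k.factorial * Real.exp (|y|/2) := by
    have h := Real.pow_div_factorial_le_exp (x := |y|/2) (by positivity) k
    rw [div_pow, div_le_iff₀ (by positivity : (0:ℝ) < (k.factorial:ℝ))] at h
    calc |y|^k = 2^k * (|y|/2)^k := by rw [div_pow]; field_simp
      _ ≤ 2^k * (Real.exp (|y|/2) * k.factorial) := by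
          rw [div_pow]
          apply mul_le_mul_of_nonneg_left h (by positivity)
      _ = 2^k * k.factorial * Real.exp (|y|/2) := by ring
  calc |y|^k * (Real.cosh (Real.pi*y/2))⁻¹
      ≤ (2^k * k.factorial * Real.exp (|y|/2)) * (2 * Real.exp (-((Real.pi/2) * |y|))) := by
        apply mul_le_mul hpoly hinv (by positivity) (by positivity)
    _ = 2 * (2^k * k.factorial) * (Real.exp (|y|/2) * Real.exp (-((Real.pi/2) * |y|))) := by ring
    _ ≤ 2 * (2^k * k.factorial) * Real.exp (-|y|) := by
        apply mul_le_mul_of_nonneg_left ?_ (by positivity)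
        rw [← Real.exp_add]
        apply Real.exp_le_exp.mpr
        have := Real.pi_gt_three
        have habs : 0 ≤ |y| := abs_nonneg y
        nlinarith

lemma integrable_poly_sech (k : ℕ) :
    Integrable (fun y : ℝ => |y|^k * (Real.cosh (Real.pi*y/2))⁻¹) := by
  apply Integrable.mono' (integrable_exp_neg_abs'.const_mul (2 * (2^k * k.factorial)))
  · apply Continuous.aestronglyMeasurable
    exact (continuous_abs.pow k).mul
      ((Real.continuous_cosh.comp (by continuity)).inv₀ fun y => (Real.cosh_pos _).ne')
  · refine ae_of_all _ fun y => ?_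
    rw [Real.norm_eq_abs, abs_of_nonneg (by positivity)]
    exact sech_poly_bound k y


noncomputable def gg : ℝ → ℝ := fun y => (2 * Real.cosh (Real.pi * y / 2))⁻¹

lemma gg_pos (y : ℝ) : 0 < gg y := by
  unfold gg; positivity

lemma gg_cont : Continuous gg := by
  apply Continuous.inv₀
  · continuity
  · intro y; positivity

lemma gg_le (y : ℝ) : gg y ≤ (Real.cosh (Real.pi*y/2))⁻¹ := by
  unfold gg
  rw [mul_inv]
  nlinarith [inv_pos.mpr (Real.cosh_pos (Real.pi*y/2)), Real.cosh_pos (Real.pi*y/2)]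

lemma integrable_poly_gg (k : ℕ) : Integrable (fun y : ℝ => |y|^k * gg y) := by
  apply (integrable_poly_sech k).mono'
  · exact ((continuous_abs.pow k).mul gg_cont).aestronglyMeasurable
  · refine ae_of_all _ fun y => ?_
    rw [Real.norm_eq_abs, abs_of_nonneg (mul_nonneg (pow_nonneg (abs_nonneg y) k) (gg_pos y).le)]
    exact mul_le_mul_of_nonneg_left (gg_le y) (by positivity)

lemma norm_exp_I_mul (x y : ℝ) : ‖Complex.exp (Complex.I * x * y)‖ = 1 := by
  rw [Complex.norm_exp]
  simp [Complex.mul_re]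

-- integrable complex integrands
lemma cont_cexp_pow_gg (ω : ℝ) (k : ℕ) :
    Continuous (fun y : ℝ => (y:ℂ)^k * Complex.exp (Complex.I * ω * y) * (gg y : ℂ)) := by
  apply Continuous.mul
  apply Continuous.mul
  · exact (Complex.continuous_ofReal.pow k)
  · exact Complex.continuous_exp.comp (by continuity)
  · exact Complex.continuous_ofReal.comp gg_cont

lemma integrable_cexp_pow_gg (ω : ℝ) (k : ℕ) :
    Integrable (fun y : ℝ => (y:ℂ)^k * Complex.exp (Complex.I * ω * y) * (gg y : ℂ)) := by
  apply (integrable_poly_gg k).mono' (cont_cexp_pow_gg ω k).aestronglyMeasurable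
  refine ae_of_all _ fun y => ?_
  rw [norm_mul, norm_mul, norm_exp_I_mul, mul_one, norm_pow, Complex.norm_real, Complex.norm_real,
    Real.norm_eq_abs, Real.norm_eq_abs, abs_of_pos (gg_pos y)]

lemma hasDerivAt_cexp_mul (y : ℝ) (ω : ℝ) :
    HasDerivAt (fun ω' : ℝ => Complex.exp (Complex.I * ω' * y))
      (Complex.I * y * Complex.exp (Complex.I * ω * y)) ω := by
  have h0 : HasDerivAt (fun x : ℝ => ((x : ℝ) : ℂ)) 1 ω := by
    simpa using (hasDerivAt_id ω).ofReal_comp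
  have h1 : HasDerivAt (fun x : ℝ => Complex.I * ↑y * ↑x) (Complex.I * ↑y) ω := by
    simpa using h0.const_mul (Complex.I * (y:ℂ))
  have h2 := h1.cexp
  have hfun : (fun x : ℝ => Complex.exp (Complex.I * ↑y * ↑x))
      = (fun x : ℝ => Complex.exp (Complex.I * ↑x * ↑y)) := by
    funext x; congr 1; ring
  rw [hfun] at h2
  convert h2 using 1
  rw [show Complex.I * (ω:ℂ) * ↑y = Complex.I * ↑y * ↑ω by ring]
  ring

lemma deriv_step (k : ℕ) (ω : ℝ) :
    HasDerivAt (fun x : ℝ => ∫ y : ℝ, (y:ℂ)^k * Complex.exp (Complex.I * x * y) * (gg y : ℂ))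
      (∫ y : ℝ, Complex.I * ((y:ℂ)^(k+1) * Complex.exp (Complex.I * ω * y) * (gg y : ℂ))) ω := by
  have key := hasDerivAt_integral_of_dominated_loc_of_deriv_le (𝕜 := ℝ) (x₀ := ω) (s := Metric.ball ω 1) (Metric.ball_mem_nhds ω one_pos)
    (F := fun x (y:ℝ) => (y:ℂ)^k * Complex.exp (Complex.I * x * y) * (gg y : ℂ))
    (F' := fun x (y:ℝ) => Complex.I * ((y:ℂ)^(k+1) * Complex.exp (Complex.I * x * y) * (gg y : ℂ)))
    (bound := fun y => |y|^(k+1) * gg y)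
    (Filter.Eventually.of_forall fun x => (cont_cexp_pow_gg x k).aestronglyMeasurable)
    (integrable_cexp_pow_gg ω k)
    ((continuous_const.mul (cont_cexp_pow_gg ω (k+1))).aestronglyMeasurable)
    (ae_of_all _ fun y x _ => ?_) ((integrable_poly_gg (k+1)))
    (ae_of_all _ fun y x _ => ?_)
  · exact key.2
  · -- norm bound
    rw [norm_mul, Complex.norm_I, one_mul, norm_mul, norm_mul, norm_exp_I_mul, mul_one,
      norm_pow, Complex.norm_real, Complex.norm_real,
      Real.norm_eq_abs, Real.norm_eq_abs, abs_of_pos (gg_pos y)]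
  · -- HasDerivAt in x
    have h := ((hasDerivAt_cexp_mul y x).const_mul ((y:ℂ)^k)).mul_const ((gg y : ℝ) : ℂ)
    exact h.congr_deriv (by ring)


noncomputable def JJ (k : ℕ) (ω : ℝ) : ℂ :=
  ∫ y : ℝ, (y:ℂ)^k * Complex.exp (Complex.I * ω * y) * (gg y : ℂ)

lemma J0_eq (ω : ℝ) : JJ 0 ω = (((Real.cosh ω)⁻¹ : ℝ) : ℂ) := by
  unfold JJ
  simp only [pow_zero, one_mul]
  exact base_fourier ω

lemma hasDerivAt_JJ (k : ℕ) (ω : ℝ) :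
    HasDerivAt (fun x : ℝ => JJ k x) (Complex.I * JJ (k+1) ω) ω := by
  have := deriv_step k ω
  unfold JJ
  rwa [MeasureTheory.integral_const_mul] at this

lemma J1_eq (ω : ℝ) :
    Complex.I * JJ 1 ω = ((-(Real.sinh ω / (Real.cosh ω)^2) : ℝ) : ℂ) := by
  have hl := hasDerivAt_JJ 0 ω
  have hS : (fun x : ℝ => JJ 0 x) = fun x : ℝ => (((Real.cosh x)⁻¹ : ℝ) : ℂ) := funext J0_eq
  have hreal : HasDerivAt (fun x : ℝ => (Real.cosh x)⁻¹)
      (-(Real.sinh ω / (Real.cosh ω)^2)) ω := by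
    have h := ((Real.hasDerivAt_cosh ω).inv (Real.cosh_pos ω).ne')
    exact h.congr_deriv (by ring)
  have hr : HasDerivAt (fun x : ℝ => JJ 0 x)
      ((↑(-(Real.sinh ω / (Real.cosh ω)^2)) : ℂ)) ω := by
    rw [hS]; exact hreal.ofReal_comp
  exact hl.unique hr

lemma J2_eq (ω : ℝ) :
    JJ 2 ω = ((((Real.cosh ω)^2 - 2*(Real.sinh ω)^2) / (Real.cosh ω)^3 : ℝ) : ℂ) := by
  have hl := (hasDerivAt_JJ 1 ω).const_mul Complex.I
  have hS : (fun x : ℝ => Complex.I * JJ 1 x)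
      = fun x : ℝ => ((-(Real.sinh x / (Real.cosh x)^2) : ℝ) : ℂ) := funext J1_eq
  have hreal : HasDerivAt (fun x : ℝ => -(Real.sinh x / (Real.cosh x)^2))
      ((2*(Real.sinh ω)^2 - (Real.cosh ω)^2) / (Real.cosh ω)^3) ω := by
    have hc := Real.cosh_pos ω
    have h := (((Real.hasDerivAt_sinh ω).div ((Real.hasDerivAt_cosh ω).pow 2)
      (pow_ne_zero 2 hc.ne'))).neg
    have hc' : Real.cosh ω ≠ 0 := hc.ne'
    exact h.congr_deriv (by simp only [Pi.pow_apply]; push_cast; field_simp; ring)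
  have hr : HasDerivAt (fun x : ℝ => Complex.I * JJ 1 x)
      ((((2*(Real.sinh ω)^2 - (Real.cosh ω)^2) / (Real.cosh ω)^3 : ℝ)) : ℂ) ω := by
    rw [hS]
    exact hreal.ofReal_comp
  have := hl.unique hr
  rw [show Complex.I * (Complex.I * JJ 2 ω) = -JJ 2 ω by
    rw [← mul_assoc, Complex.I_mul_I]; ring] at this
  rw [show JJ 2 ω = -(-JJ 2 ω) by ring, this]
  push_cast
  ring

end SechAux

theorem sum_three_hs_fourier (ω : ℝ) :
    ∫ y : ℝ, Complex.exp (Complex.I * ω * y) *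
        (((1 / 4) * (Real.cosh (Real.pi * y / 2))⁻¹ * (y ^ 2 + 1) : ℝ) : ℂ)
      = (((Real.cosh ω)⁻¹ : ℝ) : ℂ) ^ 3 := by
  have hsplit : ∀ y : ℝ, Complex.exp (Complex.I * ω * y) *
        (((1 / 4) * (Real.cosh (Real.pi * y / 2))⁻¹ * (y ^ 2 + 1) : ℝ) : ℂ)
      = (1/2 : ℂ) * ((y:ℂ)^2 * Complex.exp (Complex.I * ω * y) * (gg y : ℂ))
        + (1/2 : ℂ) * ((y:ℂ)^0 * Complex.exp (Complex.I * ω * y) * (gg y : ℂ)) := by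
    intro y
    have hgg : (gg y : ℂ) = ((2 * Real.cosh (Real.pi * y / 2))⁻¹ : ℝ) := rfl
    rw [hgg]
    have hc : Real.cosh (Real.pi * y / 2) ≠ 0 := (Real.cosh_pos _).ne'
    push_cast
    have hcC : ((Real.cosh (Real.pi * y / 2) : ℝ) : ℂ) ≠ 0 := by
      simp only [ne_eq, Complex.ofReal_eq_zero]; exact hc
    field_simp
    ring
  rw [MeasureTheory.integral_congr_ae (ae_of_all _ hsplit)]
  rw [MeasureTheory.integral_add ((integrable_cexp_pow_gg ω 2).const_mul _)
    ((integrable_cexp_pow_gg ω 0).const_mul _),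
    MeasureTheory.integral_const_mul, MeasureTheory.integral_const_mul]
  have h2 := J2_eq ω
  have h0 := J0_eq ω
  unfold JJ at h2 h0
  rw [h2, h0]
  have hc := Real.cosh_pos ω
  have hid := Real.cosh_sq_sub_sinh_sq ω
  have hfinal : (1/2)*(((Real.cosh ω)^2 - 2*(Real.sinh ω)^2) / (Real.cosh ω)^3)
      + (1/2)*((Real.cosh ω)⁻¹) = ((Real.cosh ω)⁻¹)^3 := by
    have hc' : Real.cosh ω ≠ 0 := hc.ne'
    field_simp
    linear_combination 2 * hid
  rw [show ((((Real.cosh ω)⁻¹ : ℝ)) : ℂ)^3 = ((((Real.cosh ω)⁻¹)^3 : ℝ) : ℂ) by push_cast; ring,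
    ← hfinal]
  push_cast
  ring
end
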